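/- Let G be a finite connected bipartite simple graph with at least one edge and bipartition of its vertex set into nonempty parts X and Y, and let I = I(G) be its edge ideal over a field K. Then v(I^k) = 2k − 1 for all k ≥ 1 with k ≥ min{ |Y| + 1 − max{deg(x) : x ∈ X}, |X| + 1 − max{deg(y) : y ∈ Y} }. -/

import Mathlib

open MvPolynomial

/-- A graded (homogeneous) ideal: one generated by homogeneous polynomials. -/
def IsHomogeneousIdeal {K : Type*} [Field K] {n : ℕ}
    (I : Ideal (MvPolynomial (Fin n) K)) : Prop :=
  ∃ G : Set (MvPolynomial (Fin n) K),
    (∀ f ∈ G, ∃ d, f.IsHomogeneous d) ∧ I = Ideal.span G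

/-- `Ass(I)`: the associated primes of `S/I`. -/
def Ass {K : Type*} [Field K] {n : ℕ} (I : Ideal (MvPolynomial (Fin n) K)) :
    Set (Ideal (MvPolynomial (Fin n) K)) :=
  associatedPrimes (MvPolynomial (Fin n) K) (MvPolynomial (Fin n) K ⧸ I)

/-- The local v-number `v_p(I)`. -/
noncomputable def vNumberAt {K : Type*} [Field K] {n : ℕ}
    (I p : Ideal (MvPolynomial (Fin n) K)) : ℕ :=
  sInf {d | ∃ f : MvPolynomial (Fin n) K, f.IsHomogeneous d ∧
    I.colon (Ideal.span {f}) = p}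

/-- The v-number `v(I)`. -/
noncomputable def vNumber {K : Type*} [Field K] {n : ℕ}
    (I : Ideal (MvPolynomial (Fin n) K)) : ℕ :=
  sInf {d | ∃ f : MvPolynomial (Fin n) K, ∃ p ∈ Ass I, f.IsHomogeneous d ∧
    I.colon (Ideal.span {f}) = p}

/-- `α(J)`: the least degree of a nonzero element of `J`. -/
noncomputable def alphaNum {K : Type*} [Field K] {n : ℕ}
    (J : Ideal (MvPolynomial (Fin n) K)) : ℕ :=
  sInf {d | ∃ f ∈ J, f ≠ 0 ∧ f.totalDegree = d}

/-- `c(I) = max{α(p) : p ∈ Ass(I)}`. -/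
noncomputable def cNum {K : Type*} [Field K] {n : ℕ}
    (I : Ideal (MvPolynomial (Fin n) K)) : ℕ :=
  sSup (alphaNum '' Ass I)

section Aux

variable {K : Type*} [Field K] {n : ℕ}

lemma weight_single_one (w : Fin n → ℕ) (v : Fin n) :
    Finsupp.weight w (Finsupp.single v 1) = w v := by
  simp [Finsupp.weight_apply, Finsupp.sum_single_index]

lemma prod_monomial_one {ι : Type*} (t : Finset ι) (m : ι → (Fin n →₀ ℕ)) :
    (∏ i ∈ t, (monomial (m i) (1:K))) = monomial (∑ i ∈ t, m i) 1 := by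
  classical
  induction t using Finset.induction with
  | empty => simp [monomial_eq]
  | insert _ _ h ih =>
      rw [Finset.prod_insert h, Finset.sum_insert h, ih, monomial_mul, one_mul]

lemma prod_mem_pow_card {ι : Type*} (t : Finset ι) (φ : ι → MvPolynomial (Fin n) K)
    {I : Ideal (MvPolynomial (Fin n) K)} (h : ∀ i ∈ t, φ i ∈ I) :
    (∏ i ∈ t, φ i) ∈ I ^ t.card := by
  classical
  induction t using Finset.induction with
  | empty => simp
  | @insert a t ha ih =>
      rw [Finset.prod_insert ha, Finset.card_insert_of_notMem ha, pow_succ, mul_comm]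
      exact Ideal.mul_mem_mul (h a (Finset.mem_insert_self a t))
        (ih (fun i hi => h i (Finset.mem_insert_of_mem hi)))

variable {K : Type*} [Field K] {n : ℕ}

/-- Ideal of polynomials all of whose monomials have `w`-weight at least `c`. -/
def Jw (K : Type*) [Field K] (n : ℕ) (w : Fin n → ℕ) (c : ℕ) :
    Ideal (MvPolynomial (Fin n) K) where
  carrier := {f | ∀ m ∈ f.support, c ≤ Finsupp.weight w m}
  zero_mem' := by simp
  add_mem' := by
    classical
    intro f g hf hg m hm
    rcases Finset.mem_union.mp (MvPolynomial.support_add hm) with h | h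
    · exact hf m h
    · exact hg m h
  smul_mem' := by
    classical
    intro r f hf m hm
    have := MvPolynomial.support_mul r f (by simpa using hm)
    rcases Finset.mem_add.mp this with ⟨m1, hm1, m2, hm2, rfl⟩
    calc c ≤ Finsupp.weight w m2 := hf m2 hm2
    _ ≤ _ := by rw [map_add]; omega

lemma Jw_mul {w : Fin n → ℕ} {c₁ c₂ : ℕ} {f g : MvPolynomial (Fin n) K}
    (hf : f ∈ Jw K n w c₁) (hg : g ∈ Jw K n w c₂) : f * g ∈ Jw K n w (c₁ + c₂) := by
  classical
  intro m hm
  rcases Finset.mem_add.mp (MvPolynomial.support_mul f g hm) with ⟨m1, hm1, m2, hm2, rfl⟩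
  have := hf m1 hm1
  have := hg m2 hm2
  rw [map_add]; omega

lemma pow_le_Jw {w : Fin n → ℕ} {c : ℕ} {I : Ideal (MvPolynomial (Fin n) K)}
    (h : I ≤ Jw K n w c) (k : ℕ) : I ^ k ≤ Jw K n w (k * c) := by
  induction k with
  | zero => intro f _ m _; simp
  | succ k ih =>
      rw [pow_succ]
      refine (Ideal.mul_le.mpr fun r hr s hs => ?_)
      have := Jw_mul (ih hr) (h hs)
      simpa [Nat.succ_mul] using this

noncomputable def spanVars (K : Type*) [Field K] {n : ℕ} (B : Finset (Fin n)) :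
    Ideal (MvPolynomial (Fin n) K) :=
  Ideal.span ((fun b => (X b : MvPolynomial (Fin n) K)) '' (B : Set (Fin n)))

lemma mem_spanVars_of_support {B : Finset (Fin n)} {g : MvPolynomial (Fin n) K}
    (h : ∀ m ∈ g.support, ∃ b ∈ B, m b ≠ 0) : g ∈ spanVars K B := by
  classical
  rw [g.as_sum]
  refine Ideal.sum_mem _ fun m hm => ?_
  obtain ⟨b, hbB, hb⟩ := h m hm
  have hsingle : Finsupp.single b 1 + (m - Finsupp.single b 1) = m := by
    ext i
    by_cases hib : i = b
    · subst hib; simp [Finsupp.single_apply]; omega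
    · simp [Finsupp.single_apply, Ne.symm hib]
  have key : (monomial m (coeff m g) : MvPolynomial (Fin n) K)
      = X b * monomial (m - Finsupp.single b 1) (coeff m g) := by
    rw [X, monomial_mul, one_mul, hsingle]
  rw [key]
  exact Ideal.mul_mem_right _ _ (Ideal.subset_span ⟨b, by simpa using hbB, rfl⟩)

noncomputable def killB (K : Type*) [Field K] {n : ℕ} (B : Finset (Fin n)) :
    MvPolynomial (Fin n) K →ₐ[K] MvPolynomial (Fin n) K :=
  aeval (fun i => if i ∈ B then 0 else X i)

lemma spanVars_le_ker (B : Finset (Fin n)) :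
    spanVars K B ≤ RingHom.ker (killB K B).toRingHom := by
  rw [spanVars, Ideal.span_le]
  rintro _ ⟨b, hb, rfl⟩
  simp only [SetLike.mem_coe, RingHom.mem_ker, AlgHom.toRingHom_eq_coe, RingHom.coe_coe]
  simp [killB, Finset.mem_coe.mp hb]

lemma killB_monomial_free {B : Finset (Fin n)} {m : Fin n →₀ ℕ} (hm : ∀ b ∈ B, m b = 0)
    (c : K) : killB K B (monomial m c) = monomial m c := by
  rw [killB, aeval_monomial]
  have : (Finsupp.prod m fun i e => (if i ∈ B then 0 else X i : MvPolynomial (Fin n) K) ^ e)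
      = Finsupp.prod m fun i e => (X i) ^ e := by
    apply Finsupp.prod_congr
    intro i hi
    have hiB : i ∉ B := fun hiB => (Finsupp.mem_support_iff.mp hi) (hm i hiB)
    simp [hiB]
  rw [this, monomial_eq, algebraMap_eq]

lemma killB_monomial_nonfree {B : Finset (Fin n)} {m : Fin n →₀ ℕ} {b : Fin n}
    (hbB : b ∈ B) (hb : m b ≠ 0) (c : K) : killB K B (monomial m c) = 0 := by
  have : (monomial m c : MvPolynomial (Fin n) K) ∈ spanVars K B :=
    mem_spanVars_of_support (fun m'' hm'' => by
      classical
      rw [support_monomial] at hm''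
      split at hm''
      · simp at hm''
      · simp at hm''; subst hm''; exact ⟨b, hbB, hb⟩)
  have := spanVars_le_ker B this
  simpa only [RingHom.mem_ker, AlgHom.toRingHom_eq_coe, RingHom.coe_coe] using this

lemma killB_coeff_of_free {B : Finset (Fin n)} {g : MvPolynomial (Fin n) K}
    {m : Fin n →₀ ℕ} (hm : ∀ b ∈ B, m b = 0) :
    coeff m (killB K B g) = coeff m g := by
  classical
  conv_lhs => rw [g.as_sum]
  rw [map_sum, coeff_sum]
  rw [Finset.sum_eq_single m]
  · rw [killB_monomial_free hm, coeff_monomial, if_pos rfl]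
  · intro m' hm' hne
    by_cases hfreem' : ∀ b ∈ B, m' b = 0
    · rw [killB_monomial_free hfreem', coeff_monomial, if_neg hne]
    · push_neg at hfreem'
      obtain ⟨b, hbB, hb⟩ := hfreem'
      rw [killB_monomial_nonfree hbB hb, coeff_zero]
  · intro hmm
    have : coeff m g = 0 := by simpa using MvPolynomial.mem_support_iff.not.mp hmm
    rw [this, map_zero]
    simp

lemma spanVars_eq_ker (B : Finset (Fin n)) :
    spanVars K B = RingHom.ker (killB K B).toRingHom := by
  refine le_antisymm (spanVars_le_ker B) ?_
  intro g hg
  simp only [RingHom.mem_ker, AlgHom.toRingHom_eq_coe, RingHom.coe_coe] at hg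
  apply mem_spanVars_of_support
  intro m hm
  by_contra hfree
  push_neg at hfree
  have := killB_coeff_of_free (B := B) (g := g) (m := m) (fun b hb => hfree b hb)
  rw [hg, coeff_zero] at this
  exact (MvPolynomial.mem_support_iff.mp hm) this.symm

lemma spanVars_isPrime (B : Finset (Fin n)) : (spanVars K B).IsPrime := by
  rw [spanVars_eq_ker]
  exact RingHom.ker_isPrime _

set_option maxHeartbeats 1000000 in
lemma main_mem (G : SimpleGraph (Fin n)) [DecidableRel G.Adj]
    (hconn : G.Connected)
    (A B : Finset (Fin n))
    (hA : A.Nonempty) (hB : B.Nonempty)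
    (hdisj : Disjoint A B)
    (hbip : ∀ i j : Fin n, G.Adj i j → (i ∈ A ∧ j ∈ B) ∨ (i ∈ B ∧ j ∈ A))
    (I : Ideal (MvPolynomial (Fin n) K))
    (hI : I = Ideal.span {f | ∃ i j : Fin n, G.Adj i j ∧
      f = (X i : MvPolynomial (Fin n) K) * X j})
    (k : ℕ) (hk1 : 1 ≤ k)
    (hk : B.card + 1 - A.sup (fun v => G.degree v) ≤ k) :
    ∃ f : MvPolynomial (Fin n) K, f.IsHomogeneous (2*k-1) ∧
      (I^k).colon (Ideal.span {f}) = spanVars K B := by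
  classical
  -- basic bipartite facts
  have hAB : ∀ {i j : Fin n}, G.Adj i j → i ∈ B → j ∈ A := by
    intro i j hadj hiB
    rcases hbip i j hadj with ⟨hiA, _⟩ | ⟨_, hjA⟩
    · exact absurd hiB (Finset.disjoint_left.mp hdisj hiA)
    · exact hjA
  have hBA : ∀ {i j : Fin n}, G.Adj i j → i ∈ A → j ∈ B := by
    intro i j hadj hiA
    rcases hbip i j hadj with ⟨_, hjB⟩ | ⟨hiB, _⟩
    · exact hjB
    · exact absurd hiB (Finset.disjoint_left.mp hdisj hiA)
  -- the max-degree vertex x ∈ A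
  obtain ⟨x, hxA, hxd⟩ := Finset.exists_mem_eq_sup A hA (fun v => G.degree v)
  have hxB : x ∉ B := Finset.disjoint_left.mp hdisj hxA
  -- a neighbor y1 of x
  obtain ⟨b0, hb0B⟩ := hB
  have hxb0 : x ≠ b0 := fun h => hxB (h ▸ hb0B)
  obtain ⟨y1, hy1⟩ : ∃ y, G.Adj x y := by
    obtain ⟨p⟩ := hconn x b0
    cases p with
    | nil => exact absurd rfl hxb0
    | cons h _ => exact ⟨_, h⟩
  have hy1B : y1 ∈ B := hBA hy1 hxA
  -- neighbors of x lie in B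
  have hNB : G.neighborFinset x ⊆ B := by
    intro y hy
    exact hBA ((SimpleGraph.mem_neighborFinset G x y).mp hy) hxA
  set S : Finset (Fin n) := B \ G.neighborFinset x with hS
  have hScard : S.card = B.card - G.degree x := by
    rw [hS, Finset.card_sdiff_of_subset hNB]; rfl
  have hdB : G.degree x ≤ B.card := by
    rw [SimpleGraph.degree]; exact Finset.card_le_card hNB
  have hsk : S.card ≤ k - 1 := by
    rw [hScard]; rw [hxd] at hk; omega
  -- parent/grandparent structure
  have Hgp : ∀ b : Fin n, ∃ ag : (Fin n) × (Fin n), b ∈ S →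
      G.Adj ag.1 b ∧ G.Adj ag.1 ag.2 ∧ ag.2 ∈ B ∧ G.dist x ag.2 < G.dist x b := by
    intro b
    by_cases hbS : b ∈ S
    swap
    · exact ⟨(x, x), fun h => absurd h hbS⟩
    obtain ⟨hbB, hbN⟩ := Finset.mem_sdiff.mp hbS
    have hnadj : ¬ G.Adj x b := fun h => hbN ((SimpleGraph.mem_neighborFinset G x b).mpr h)
    have hxb : x ≠ b := fun h => hxB (h ▸ hbB)
    obtain ⟨p, hp⟩ := hconn.exists_walk_length_eq_dist x b
    have hq : p.reverse.length = G.dist x b := by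
      rw [SimpleGraph.Walk.length_reverse, hp]
    generalize hqq : p.reverse = q at hq
    clear hqq hp
    cases q with
    | nil => exact absurd rfl hxb.symm
    | @cons _ c _ h q' =>
      cases q' with
      | nil => exact absurd h.symm hnadj
      | @cons _ g _ h2 q'' =>
        have hcA : c ∈ A := hAB h hbB
        have hgB : g ∈ B := hBA h2 hcA
        have hdg : G.dist x g ≤ q''.length := by
          rw [SimpleGraph.dist_comm]
          exact SimpleGraph.dist_le q''
        have hlen : q''.length + 2 = G.dist x b := by
          simpa [SimpleGraph.Walk.length_cons] using hq
        refine ⟨(c, g), fun _ => ⟨h.symm, h2, hgB, ?_⟩⟩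
        show G.dist x g < G.dist x b
        omega
  choose ag hag using Hgp
  set aa : Fin n → Fin n := fun b => (ag b).1 with haa
  set gg : Fin n → Fin n := fun b => (ag b).2 with hgg
  have hedgeS : ∀ b ∈ S, G.Adj (aa b) (gg b) := fun b hb => ((hag b hb).2.1)
  have hadjS : ∀ b ∈ S, G.Adj (aa b) b := fun b hb => ((hag b hb).1)
  have hggB : ∀ b ∈ S, gg b ∈ B := fun b hb => ((hag b hb).2.2.1)
  have haaA : ∀ b ∈ S, aa b ∈ A := fun b hb =>
    hAB (hadjS b hb).symm (Finset.mem_sdiff.mp hb).1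
  -- membership of edges in I
  have hedgeI : ∀ {i j : Fin n}, G.Adj i j → (X i : MvPolynomial (Fin n) K) * X j ∈ I := by
    intro i j hadj
    rw [hI]
    exact Ideal.subset_span ⟨i, j, hadj, rfl⟩
  -- chain lemma
  have chain : ∀ N : ℕ, ∀ b ∈ B, G.dist x b ≤ N → ∃ C : Finset (Fin n), C ⊆ S ∧
      (∀ c ∈ C, G.dist x c ≤ G.dist x b) ∧
      ((X x * X b * ∏ c ∈ C, (X (aa c) * X (gg c)) : MvPolynomial (Fin n) K)
        ∈ I^(C.card + 1)) := by
    intro N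
    induction N with
    | zero =>
      intro b hbB hble
      have hxb : x ≠ b := fun h => hxB (h ▸ hbB)
      have := hconn.pos_dist_of_ne hxb
      omega
    | succ N ih =>
      intro b hbB hble
      by_cases hadj : G.Adj x b
      · refine ⟨∅, Finset.empty_subset _, by simp, ?_⟩
        simpa using hedgeI hadj
      · have hbS : b ∈ S := Finset.mem_sdiff.mpr ⟨hbB, fun h =>
          hadj ((SimpleGraph.mem_neighborFinset G x b).mp h)⟩
        have hadj1 : G.Adj (aa b) b := hadjS b hbS
        have hgB : gg b ∈ B := hggB b hbS
        have hdlt : G.dist x (gg b) < G.dist x b := (hag b hbS).2.2.2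
        have hgle : G.dist x (gg b) ≤ N := by omega
        obtain ⟨C', hC'S, hC'dist, hC'mem⟩ := ih (gg b) hgB hgle
        have hbC' : b ∉ C' := fun hbc => by
          have := hC'dist b hbc
          omega
        refine ⟨insert b C', Finset.insert_subset hbS hC'S, ?_, ?_⟩
        · intro c hc
          rcases Finset.mem_insert.mp hc with rfl | hc'
          · exact le_refl _
          · exact le_trans (hC'dist c hc') (le_of_lt hdlt)
        · have heq : (X x * X b * ∏ c ∈ insert b C', (X (aa c) * X (gg c))
              : MvPolynomial (Fin n) K)
              = (X (aa b) * X b) * (X x * X (gg b) * ∏ c ∈ C', (X (aa c) * X (gg c))) := by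
            rw [Finset.prod_insert hbC']
            ring
          rw [heq, Finset.card_insert_of_notMem hbC',
            show C'.card + 1 + 1 = 1 + (C'.card + 1) by omega, pow_add, pow_one]
          exact Ideal.mul_mem_mul (hedgeI hadj1) hC'mem
  -- the witness polynomial
  set e2 : ℕ := k - 1 - S.card with he2
  set f : MvPolynomial (Fin n) K :=
    X x ^ (e2 + 1) * X y1 ^ e2 * ∏ b ∈ S, (X (aa b) * X (gg b)) with hf
  -- homogeneity
  have hfhom : f.IsHomogeneous (2*k-1) := by
    have h1 : (X x ^ (e2+1) : MvPolynomial (Fin n) K).IsHomogeneous (e2+1) :=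
      isHomogeneous_X_pow _ _
    have h2 : (X y1 ^ e2 : MvPolynomial (Fin n) K).IsHomogeneous e2 :=
      isHomogeneous_X_pow _ _
    have h3 : (∏ b ∈ S, (X (aa b) * X (gg b)) : MvPolynomial (Fin n) K).IsHomogeneous
        (∑ _b ∈ S, 2) := by
      refine IsHomogeneous.prod _ _ _ (fun b _ => ?_)
      simpa using (isHomogeneous_X K (aa b)).mul (isHomogeneous_X K (gg b))
    have := (h1.mul h2).mul h3
    have hdeg : (e2 + 1 + e2) + (∑ _b ∈ S, 2) = 2*k-1 := by
      rw [Finset.sum_const, smul_eq_mul]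
      omega
    rw [hf]
    exact hdeg ▸ this
  -- forward: X b * f ∈ I^k for b ∈ B
  have hforward : ∀ b ∈ B, (X b : MvPolynomial (Fin n) K) * f ∈ I^k := by
    intro b hbB
    obtain ⟨C, hCS, _, hCmem⟩ := chain (G.dist x b) b hbB (le_refl _)
    have hCcard : C.card ≤ S.card := Finset.card_le_card hCS
    have heq : (X b : MvPolynomial (Fin n) K) * f
        = (X x * X b * ∏ c ∈ C, (X (aa c) * X (gg c)))
          * (∏ c ∈ S \ C, (X (aa c) * X (gg c)))
          * (X x * X y1)^e2 := by
      rw [hf, ← Finset.prod_sdiff hCS, mul_pow]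
      ring
    have h2 : (∏ c ∈ S \ C, (X (aa c) * X (gg c)) : MvPolynomial (Fin n) K)
        ∈ I ^ (S \ C).card :=
      prod_mem_pow_card _ _ (fun c hc => hedgeI (hedgeS c (Finset.mem_sdiff.mp hc).1))
    have h3 : ((X x * X y1)^e2 : MvPolynomial (Fin n) K) ∈ I ^ e2 :=
      Ideal.pow_mem_pow (hedgeI hy1) e2
    have hcard : (S \ C).card = S.card - C.card := Finset.card_sdiff_of_subset hCS
    rw [heq, show k = ((C.card + 1) + (S.card - C.card)) + e2 by omega, pow_add, pow_add,
      ← hcard]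
    exact Ideal.mul_mem_mul (Ideal.mul_mem_mul hCmem h2) h3
  -- f as a monomial
  set M : Fin n →₀ ℕ := (e2+1) • Finsupp.single x 1 + e2 • Finsupp.single y1 1
      + ∑ b ∈ S, (Finsupp.single (aa b) 1 + Finsupp.single (gg b) 1) with hM
  have hfmono : f = monomial M 1 := by
    rw [hf, hM]
    have hX : ∀ v : Fin n, (X v : MvPolynomial (Fin n) K) = monomial (Finsupp.single v 1) 1 :=
      fun v => rfl
    simp only [hX, monomial_pow, one_pow, monomial_mul, one_mul, mul_one]
    rw [prod_monomial_one]
    simp [monomial_mul]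
  -- B-weight
  set w : Fin n → ℕ := fun i => if i ∈ B then 1 else 0 with hw
  have hwM : Finsupp.weight w M = k - 1 := by
    rw [hM]
    simp only [map_add, map_sum, map_nsmul, weight_single_one]
    have hwx : w x = 0 := by simp [hw, hxB]
    have hwy1 : w y1 = 1 := by simp [hw, hy1B]
    have hterm : ∀ b ∈ S, w (aa b) + w (gg b) = 1 := by
      intro b hb
      have h1 : w (aa b) = 0 := by
        simp [hw, Finset.disjoint_left.mp hdisj (haaA b hb)]
      have h2 : w (gg b) = 1 := by simp [hw, hggB b hb]
      rw [h1, h2]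
    rw [hwx, hwy1, Finset.sum_congr rfl hterm, Finset.sum_const, smul_eq_mul]
    simp only [smul_eq_mul, mul_one, mul_zero]
    omega
  -- I ≤ Jw w 1
  have hIJw : I ≤ Jw K n w 1 := by
    rw [hI, Ideal.span_le]
    rintro _ ⟨i, j, hadj, rfl⟩
    intro m hm
    have hXX : (X i : MvPolynomial (Fin n) K) * X j
        = monomial (Finsupp.single i 1 + Finsupp.single j 1) 1 := by
      rw [X, X, monomial_mul, one_mul]
    rw [hXX, support_monomial, if_neg (one_ne_zero)] at hm
    rw [Finset.mem_singleton.mp hm, map_add, weight_single_one, weight_single_one]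
    rcases hbip i j hadj with ⟨_, hjB⟩ | ⟨hiB, _⟩
    · have : w j = 1 := by simp [hw, hjB]
      omega
    · have : w i = 1 := by simp [hw, hiB]
      omega
  -- conclude
  refine ⟨f, hfhom, le_antisymm ?_ ?_⟩
  · intro g hg
    have hgf : g * f ∈ I^k := Ideal.mem_colon_span_singleton.mp hg
    have hgf' : g * f ∈ Jw K n w k := by
      have := pow_le_Jw hIJw k hgf
      simpa using this
    apply mem_spanVars_of_support
    intro m hm
    have hsupp : m + M ∈ (g * f).support := by
      rw [hfmono, MvPolynomial.mem_support_iff, coeff_mul_monomial, mul_one]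
      exact MvPolynomial.mem_support_iff.mp hm
    have hwge := hgf' _ hsupp
    rw [map_add, hwM] at hwge
    have hwm : 1 ≤ Finsupp.weight w m := by omega
    by_contra hc
    push_neg at hc
    have : Finsupp.weight w m = 0 := by
      rw [Finsupp.weight_apply, Finsupp.sum]
      refine Finset.sum_eq_zero (fun i hi => ?_)
      have hiB : i ∉ B := fun hiB => (Finsupp.mem_support_iff.mp hi) (hc i hiB)
      simp [hw, hiB]
    omega
  · rw [spanVars, Ideal.span_le]
    rintro _ ⟨b, hb, rfl⟩
    rw [SetLike.mem_coe, Ideal.mem_colon_span_singleton]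
    exact hforward b (Finset.mem_coe.mp hb)

end Aux

/-- Let `G` be a finite connected bipartite simple graph with at least one
edge, with bipartition into nonempty parts `A` and `B`, and `I = I(G)` its edge ideal.
Then `v(I^k) = 2k − 1` for all `k ≥ 1` with
`k ≥ min{|B| + 1 − max{deg x : x ∈ A}, |A| + 1 − max{deg y : y ∈ B}}`. -/
theorem stmt14 {K : Type*} [Field K] {n : ℕ}
    (G : SimpleGraph (Fin n)) [DecidableRel G.Adj]
    (hconn : G.Connected)
    (hedge : ∃ i j : Fin n, G.Adj i j)
    (A B : Finset (Fin n))
    (hA : A.Nonempty) (hB : B.Nonempty)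
    (hcover : A ∪ B = Finset.univ) (hdisj : Disjoint A B)
    (hbip : ∀ i j : Fin n, G.Adj i j → (i ∈ A ∧ j ∈ B) ∨ (i ∈ B ∧ j ∈ A))
    (I : Ideal (MvPolynomial (Fin n) K))
    (hI : I = Ideal.span {f | ∃ i j : Fin n, G.Adj i j ∧
      f = (X i : MvPolynomial (Fin n) K) * X j}) :
    ∀ k : ℕ, 1 ≤ k →
      min (B.card + 1 - A.sup (fun v => G.degree v))
          (A.card + 1 - B.sup (fun v => G.degree v)) ≤ k →
      (vNumber (I ^ k) : ℤ) = 2 * k - 1 := by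
  classical
  intro k hk1 hmin
  -- the witness of degree 2k-1
  have hwitness : ∃ f : MvPolynomial (Fin n) K, f.IsHomogeneous (2*k-1) ∧
      ∃ P : Finset (Fin n), (I^k).colon (Ideal.span {f}) = spanVars K P := by
    rcases min_le_iff.mp hmin with h | h
    · obtain ⟨f, h1, h2⟩ := main_mem G hconn A B hA hB hdisj hbip I hI k hk1 h
      exact ⟨f, h1, B, h2⟩
    · obtain ⟨f, h1, h2⟩ := main_mem G hconn B A hB hA hdisj.symm
        (fun i j hadj => (hbip i j hadj).symm) I hI k hk1 h
      exact ⟨f, h1, A, h2⟩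
  obtain ⟨f, hfhom, P, hcolon⟩ := hwitness
  -- membership of 2k-1 in the defining set
  have hmem : (2*k-1) ∈ {d | ∃ f : MvPolynomial (Fin n) K, ∃ p ∈ Ass (I^k),
      f.IsHomogeneous d ∧ (I^k).colon (Ideal.span {f}) = p} := by
    refine ⟨f, spanVars K P, ?_, hfhom, hcolon⟩
    refine ⟨spanVars_isPrime P, Ideal.Quotient.mk (I^k) f, ?_⟩
    rw [← hcolon]
    rw [hcolon, ← (spanVars_isPrime P).radical, ← hcolon]
    congr 1
    ext r
    rw [Submodule.mem_colon_singleton, Ideal.mem_colon_span_singleton]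
    have hsmul : r • (Ideal.Quotient.mk (I^k) f) = Ideal.Quotient.mk (I^k) (r * f) := rfl
    rw [hsmul, Submodule.mem_bot, Ideal.Quotient.eq_zero_iff_mem]
  -- lower bound
  have hlb : ∀ d ∈ {d | ∃ f : MvPolynomial (Fin n) K, ∃ p ∈ Ass (I^k),
      f.IsHomogeneous d ∧ (I^k).colon (Ideal.span {f}) = p}, 2*k-1 ≤ d := by
    rintro d ⟨g, p, hp, hghom, hgcolon⟩
    have hprime : p.IsPrime := hp.isPrime
    have hg0 : g ≠ 0 := by
      rintro rfl
      refine hprime.ne_top ?_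
      rw [← hgcolon]
      refine le_antisymm le_top ?_
      intro r _
      rw [Ideal.mem_colon_span_singleton, mul_zero]
      exact Ideal.zero_mem _
    obtain ⟨i, j, hadj⟩ := hedge
    have hIkp : I^k ≤ p := by
      rw [← hgcolon]
      intro r hr
      rw [Ideal.mem_colon_span_singleton]
      exact Ideal.mul_mem_right _ _ hr
    have hXX : (X i : MvPolynomial (Fin n) K) * X j ∈ I := by
      rw [hI]; exact Ideal.subset_span ⟨i, j, hadj, rfl⟩
    have hXXp : (X i : MvPolynomial (Fin n) K) * X j ∈ p :=
      hprime.mem_of_pow_mem k (hIkp (Ideal.pow_mem_pow hXX k))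
    have hvp : ∃ v : Fin n, (X v : MvPolynomial (Fin n) K) ∈ p := by
      rcases hprime.mem_or_mem hXXp with h | h
      · exact ⟨i, h⟩
      · exact ⟨j, h⟩
    obtain ⟨v, hv⟩ := hvp
    have hvg : (X v : MvPolynomial (Fin n) K) * g ∈ I^k := by
      rw [← hgcolon] at hv
      exact Ideal.mem_colon_span_singleton.mp hv
    have hvg0 : (X v : MvPolynomial (Fin n) K) * g ≠ 0 :=
      mul_ne_zero (X_ne_zero v) hg0
    have hvghom : ((X v : MvPolynomial (Fin n) K) * g).IsHomogeneous (1 + d) :=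
      (isHomogeneous_X K v).mul hghom
    -- total degree ideal bound
    have hIJ : I ≤ Jw K n (fun _ => 1) 2 := by
      rw [hI, Ideal.span_le]
      rintro _ ⟨i', j', hadj', rfl⟩
      intro m hm
      have hXX' : (X i' : MvPolynomial (Fin n) K) * X j'
          = monomial (Finsupp.single i' 1 + Finsupp.single j' 1) 1 := by
        rw [X, X, monomial_mul, one_mul]
      rw [hXX', support_monomial, if_neg (one_ne_zero)] at hm
      rw [Finset.mem_singleton.mp hm, map_add, weight_single_one, weight_single_one]
    have hJk : (X v : MvPolynomial (Fin n) K) * g ∈ Jw K n (fun _ => 1) (k*2) :=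
      pow_le_Jw hIJ k hvg
    obtain ⟨m, hm⟩ := (MvPolynomial.support_nonempty.mpr hvg0)
    have h1 := hJk m hm
    have h2 : Finsupp.weight (fun _ => (1:ℕ)) m = 1 + d :=
      hvghom (MvPolynomial.mem_support_iff.mp hm)
    omega
  have hval : vNumber (I^k) = 2*k-1 := by
    rw [vNumber]
    exact le_antisymm (Nat.sInf_le hmem) (le_csInf ⟨_, hmem⟩ hlb)
  rw [hval]
  omega
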